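/- arXiv:2205.14984 — 5 statements merged into one kernel-verified Lean document; each statement's English description precedes it below -/
import Mathlib

section
/- Let G be a finite group, K ≤ G a subgroup and y ∈ K. Assume (1) N_G(K) = K, and (2) for every g ∈ G, y ∈ K^g implies K^g = K. Then for any x ∈ G with x ∉ K and any n ≥ 1, the iterated Engel commutator [x,_n y] is not the identity. -/
/-- The iterated Engel commutator, with `[x,y] = x⁻¹y⁻¹xy`. -/
def engel {G : Type*} [Group G] (x y : G) : ℕ → G
  | 0 => x
  | n + 1 => (engel x y n)⁻¹ * y⁻¹ * engel x y n * y

/-- Let `K ≤ G` with `N_G(K) = K`, `y ∈ K`, and suppose `y ∈ K^g` implies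
`K^g = K` (where `K^g = g⁻¹Kg`). Then for `x ∉ K`, no iterated Engel
commutator `[x,_n y]` (`n ≥ 1`) is trivial. -/
theorem engel_ne_one_of_not_mem {G : Type*} [Group G] [Finite G]
    (K : Subgroup G) (y : G) (hy : y ∈ K)
    (h1 : Subgroup.normalizer (K : Set G) = K)
    (h2 : ∀ g : G, g * y * g⁻¹ ∈ K → ∀ k : G, (g * k * g⁻¹ ∈ K ↔ k ∈ K))
    (x : G) (hx : x ∉ K) :
    ∀ n : ℕ, 1 ≤ n → engel x y n ≠ 1 := by
  have key : ∀ n, engel x y n ∈ K → x ∈ K := by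
    intro n
    induction n with
    | zero => exact fun h => h
    | succ n ih =>
      intro h
      apply ih
      set z := engel x y n with hz
      have h' : z⁻¹ * y⁻¹ * z ∈ K := by
        have := K.mul_mem h (K.inv_mem hy)
        simpa [engel, mul_assoc] using this
      have hyz : z⁻¹ * y * z⁻¹⁻¹ ∈ K := by
        have := K.inv_mem h'
        simpa [mul_assoc] using this
      have hg := h2 z⁻¹ hyz
      have hnorm : z⁻¹ ∈ Subgroup.normalizer (K : Set G) := by
        rw [Subgroup.mem_normalizer_iff]
        intro k
        exact (hg k).symm
      have hzK : z ∈ K := by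
        rw [← h1]
        exact (Subgroup.inv_mem_iff _).mp hnorm
      exact hzK
  intro n hn h1n
  obtain ⟨m, rfl⟩ := Nat.exists_eq_add_of_le hn
  exact hx (key _ (h1n ▸ K.one_mem))
end

section
/- Let q be a prime power with q ≡ 5 (mod 8), and let i ∈ F_q with i² = -1. Then there exists α ∈ F_q such that α is a nonzero square, α - i is a nonzero square, and α - 2i is not a square in F_q. -/
section Aux

variable {F : Type*} [Field F] [Fintype F]

private lemma aux_char (hq : Fintype.card F % 8 = 5) : ringChar F ≠ 2 := by
  intro h
  have := FiniteField.even_card_of_char_two h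
  omega

omit [Fintype F] in
private lemma aux_ns_ne_zero {a : F} (h : ¬ IsSquare a) : a ≠ 0 := by
  rintro rfl
  exact h ⟨0, by ring⟩

private lemma aux_pow_ns (hq : Fintype.card F % 8 = 5) {a : F} (h : ¬ IsSquare a) :
    a ^ (Fintype.card F / 2) = -1 := by
  have hc := aux_char hq
  have ha := aux_ns_ne_zero h
  have h1 : a ^ (Fintype.card F / 2) ≠ 1 := by
    intro h1
    exact h ((FiniteField.isSquare_iff hc ha).mpr h1)
  have hodd : Fintype.card F % 2 = 1 := by omega
  have h2 : a ^ (Fintype.card F / 2) * a ^ (Fintype.card F / 2) = 1 := by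
    rw [← pow_add]
    have : Fintype.card F / 2 + Fintype.card F / 2 = Fintype.card F - 1 := by omega
    rw [this]
    exact FiniteField.pow_card_sub_one_eq_one a ha
  rcases mul_self_eq_one_iff.mp h2 with h3 | h3
  · exact absurd h3 h1
  · exact h3

/-- product of two nonsquares is a square -/
private lemma aux_mulNN (hq : Fintype.card F % 8 = 5) {a b : F}
    (ha : ¬ IsSquare a) (hb : ¬ IsSquare b) : IsSquare (a * b) := by
  have hc := aux_char hq
  have hab : a * b ≠ 0 := mul_ne_zero (aux_ns_ne_zero ha) (aux_ns_ne_zero hb)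
  rw [FiniteField.isSquare_iff hc hab, mul_pow, aux_pow_ns hq ha, aux_pow_ns hq hb]
  ring

/-- nonsquare times nonzero square is a nonsquare -/
private lemma aux_mulNS (hq : Fintype.card F % 8 = 5) {a b : F}
    (ha : ¬ IsSquare a) (hb0 : b ≠ 0) (hb : IsSquare b) : ¬ IsSquare (a * b) := by
  have hc := aux_char hq
  have hab : a * b ≠ 0 := mul_ne_zero (aux_ns_ne_zero ha) hb0
  rw [FiniteField.isSquare_iff hc hab, mul_pow, aux_pow_ns hq ha,
    (FiniteField.isSquare_iff hc hb0).mp hb]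
  intro h
  have h2 : (2 : F) ≠ 0 := Ring.two_ne_zero hc
  apply h2
  linear_combination -h

/-- the key existence lemma: a nonsquare `u` with `u+1` nonsquare
and `u-1` a nonzero square. -/
private lemma aux_exists_u (hq : Fintype.card F % 8 = 5) :
    ∃ u : F, ¬ IsSquare u ∧ ¬ IsSquare (u + 1) ∧ (u - 1 ≠ 0 ∧ IsSquare (u - 1)) := by
  have hc := aux_char hq
  have h2 : ¬ IsSquare (2 : F) := by
    rw [FiniteField.isSquare_two_iff]
    intro h
    exact h.2 hq
  have hneg1 : IsSquare (-1 : F) := by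
    rw [FiniteField.isSquare_neg_one_iff]
    omega
  by_contra hcon
  push_neg at hcon
  -- step: from an NN pair, the element to the left is also a nonsquare
  have step : ∀ u : F, ¬ IsSquare u → ¬ IsSquare (u + 1) → ¬ IsSquare (u - 1) := by
    intro u hu hu1
    rcases eq_or_ne (u - 1) 0 with h0 | h0
    · intro _
      apply hu
      have : u = 1 := by linear_combination h0
      rw [this]
      exact ⟨1, by ring⟩
    · intro hs
      exact (hcon u hu hu1 h0) hs
  -- descent: from an NN pair, all elements `u - n` are nonsquares
  have descent : ∀ n : ℕ, ∀ u : F, ¬ IsSquare u → ¬ IsSquare (u + 1) →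
      ¬ IsSquare (u - n) ∧ ¬ IsSquare (u - n + 1) := by
    intro n
    induction n with
    | zero => intro u hu hu1; simpa using ⟨hu, hu1⟩
    | succ n ih =>
        intro u hu hu1
        obtain ⟨h1, h2'⟩ := ih u hu hu1
        have hl : ¬ IsSquare (u - n - 1) := step _ h1 h2'
        constructor
        · have : u - (↑(n+1) : F) = u - n - 1 := by push_cast; ring
          rw [this]; exact hl
        · have : u - (↑(n+1) : F) + 1 = u - n := by push_cast; ring
          rw [this]; exact h1
  -- chain: 2^(n+2) - 2 is always a nonsquare
  have chain : ∀ n : ℕ, ¬ IsSquare ((2 : F) ^ (n + 2) - 2) := by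
    intro n
    induction n with
    | zero =>
        have : (2 : F) ^ (0 + 2) - 2 = 2 := by norm_num
        rw [this]; exact h2
    | succ n ih =>
        by_cases hs : IsSquare ((2 : F) ^ (n + 2) - 2 + 1)
        · -- then 2^(n+2) - 1 is a nonzero square, multiply by 2
          have hne : (2 : F) ^ (n + 2) - 2 + 1 ≠ 0 := by
            intro h0
            apply ih
            have : (2 : F) ^ (n + 2) - 2 = -1 := by linear_combination h0
            rw [this]; exact hneg1
          have hm := aux_mulNS hq h2 hne hs
          have heq : (2 : F) * ((2 : F) ^ (n + 2) - 2 + 1) = (2 : F) ^ (n + 1 + 2) - 2 := by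
            ring
          rw [heq] at hm
          exact hm
        · -- NN pair at an "integer" point: descend to 1, contradiction
          exfalso
          obtain ⟨hd, _⟩ := descent (2 ^ (n + 2) - 3) _ ih hs
          apply hd
          have h3 : (3 : ℕ) ≤ 2 ^ (n + 2) := by
            calc (3:ℕ) ≤ 4 := by norm_num
            _ = 2 ^ 2 := by norm_num
            _ ≤ 2 ^ (n + 2) := Nat.pow_le_pow_right (by norm_num) (by omega)
          have hcast : ((2 ^ (n + 2) - 3 : ℕ) : F) = (2 : F) ^ (n + 2) - 3 := by
            push_cast [Nat.cast_sub h3]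
            ring
          have : (2 : F) ^ (n + 2) - 2 - ((2 ^ (n + 2) - 3 : ℕ) : F) = 1 := by
            rw [hcast]; ring
          rw [this]
          exact ⟨1, by ring⟩
  -- conclude: take n = q - 3, then 2^(n+2) = 2^(q-1) = 1, so -1 is a nonsquare
  have hcard : 5 ≤ Fintype.card F := by omega
  have hfin := chain (Fintype.card F - 3)
  apply hfin
  have hexp : Fintype.card F - 3 + 2 = Fintype.card F - 1 := by omega
  rw [hexp, FiniteField.pow_card_sub_one_eq_one (2 : F) (Ring.two_ne_zero hc)]
  have : (1 : F) - 2 = -1 := by ring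
  rw [this]
  exact hneg1

end Aux

/-- If `q ≡ 5 (mod 8)` and `i² = -1` in `F_q`, then there exists `α ∈ F_q`
which is a nonzero square, with `α - i` a nonzero square and `α - 2i` not a
square. -/
theorem exists_alpha_of_card_mod_eight_eq_five {F : Type*} [Field F] [Fintype F]
    (hq : Fintype.card F % 8 = 5) (i : F) (hi : i ^ 2 = -1) :
    ∃ α : F, (α ≠ 0 ∧ IsSquare α) ∧ (α - i ≠ 0 ∧ IsSquare (α - i)) ∧
      ¬ IsSquare (α - 2 * i) := by
  have hc := aux_char hq
  have h2 : (2 : F) ≠ 0 := Ring.two_ne_zero hc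
  have hi0 : i ≠ 0 := by
    intro h0
    apply h2
    have h1 : (1 : F) = -(-1) := by ring
    have : (-1 : F) = 0 := by rw [← hi, h0]; ring
    linear_combination -2 * this
  -- i is a nonsquare
  have hins : ¬ IsSquare i := by
    intro hs
    obtain ⟨k, hk⟩ : ∃ k, Fintype.card F = 8 * k + 5 := ⟨Fintype.card F / 8, by omega⟩
    have hd : Fintype.card F / 2 = 4 * k + 2 := by omega
    have := (FiniteField.isSquare_iff hc hi0).mp hs
    rw [hd] at this
    have hi4 : i ^ 4 = 1 := by
      have : i ^ 4 = (i ^ 2) ^ 2 := by ring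
      rw [this, hi]; ring
    have hpow : i ^ (4 * k + 2) = -1 := by
      rw [pow_add, pow_mul, hi4, one_pow, one_mul, hi]
    rw [hpow] at this
    apply h2
    linear_combination -this
  obtain ⟨u, hu, hu1, hum0, hums⟩ := aux_exists_u hq
  refine ⟨i * (u + 1), ⟨?_, ?_⟩, ⟨?_, ?_⟩, ?_⟩
  · exact mul_ne_zero hi0 (aux_ns_ne_zero hu1)
  · exact aux_mulNN hq hins hu1
  · have : i * (u + 1) - i = i * u := by ring
    rw [this]
    exact mul_ne_zero hi0 (aux_ns_ne_zero hu)
  · have : i * (u + 1) - i = i * u := by ring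
    rw [this]
    exact aux_mulNN hq hins hu
  · have : i * (u + 1) - 2 * i = i * (u - 1) := by ring
    rw [this]
    exact aux_mulNS hq hins hum0 hums
end

section
/- Let q ≡ 3 (mod 4) be an odd prime power, let z = [[0,1],[-1,0]] ∈ SL₂(F_q), and let e₁ = (1,0) ∈ F_q². Then the set { e₁ · (g⁻¹ z g) : g ∈ SL₂(F_q) } equals F_q² minus the line spanned by e₁. -/
open Polynomial Matrix

/-- Let `q ≡ 3 (mod 4)`, `z = !![0,1;-1,0]` and `e₁ = ![1,0]`. Then the set of
vectors `e₁ ⬝ (g⁻¹ z g)` for `g ∈ SL₂(F_q)` equals `F_q²` minus the line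
spanned by `e₁`. -/
theorem vecMul_conj_orbit_eq {F : Type*} [Field F] [Fintype F]
    (hq : Fintype.card F % 4 = 3) :
    {v : Fin 2 → F | ∃ g : Matrix (Fin 2) (Fin 2) F, g.det = 1 ∧
        Matrix.vecMul ![1, 0] (g⁻¹ * !![0, 1; -1, 0] * g) = v} =
      {v : Fin 2 → F | v ∉ Submodule.span F {![(1 : F), 0]}} := by
  have hns : ¬ IsSquare (-1 : F) := by
    rw [FiniteField.isSquare_neg_one_iff]; simp [hq]
  have hodd : Fintype.card F % 2 = 1 := by omega
  have hsum : ∀ x : F, ∃ a b : F, a ^ 2 + b ^ 2 = x := by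
    intro x
    obtain ⟨a, b, hab⟩ :=
      FiniteField.exists_root_sum_quadratic (f := (X : F[X]) ^ 2) (g := X ^ 2 - C x)
        (degree_X_pow 2) (degree_X_pow_sub_C (by norm_num) _) hodd
    refine ⟨a, b, ?_⟩
    rw [← sub_eq_zero]
    simpa only [eval_C, eval_X, eval_pow, eval_sub, ← add_sub_assoc] using hab
  ext v
  simp only [Set.mem_setOf_eq]
  constructor
  · rintro ⟨g, hg, rfl⟩
    intro hv
    rw [Submodule.mem_span_singleton] at hv
    obtain ⟨c, hc⟩ := hv
    set w : Fin 2 → F := Matrix.vecMul ![1, 0] g⁻¹ with hw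
    have hginv : IsUnit g.det := by rw [hg]; exact isUnit_one
    have hwg : Matrix.vecMul w g = ![1, 0] := by
      rw [hw, Matrix.vecMul_vecMul, Matrix.nonsing_inv_mul g hginv, Matrix.vecMul_one]
    have h1 : Matrix.vecMul (Matrix.vecMul w !![0, 1; -1, 0]) g = c • ![1, 0] := by
      rw [hw, Matrix.vecMul_vecMul, Matrix.vecMul_vecMul, ← Matrix.mul_assoc]
      exact hc.symm
    have hkey : Matrix.vecMul w !![0, 1; -1, 0] = c • w := by
      have h2 : Matrix.vecMul (Matrix.vecMul w !![0, 1; -1, 0]) (g * g⁻¹)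
          = Matrix.vecMul (c • ![1, 0]) g⁻¹ := by
        rw [← Matrix.vecMul_vecMul, h1]
      rw [Matrix.mul_nonsing_inv g hginv, Matrix.vecMul_one] at h2
      rw [h2, Matrix.smul_vecMul, ← hw]
    have h0 : -(w 1) = c * w 0 := by
      have := congrFun hkey 0
      simpa [Matrix.vecMul, dotProduct, Fin.sum_univ_two] using this
    have h1' : w 0 = c * w 1 := by
      have := congrFun hkey 1
      simpa [Matrix.vecMul, dotProduct, Fin.sum_univ_two] using this
    have hw0 : w 0 = 0 ∧ w 1 = 0 := by
      by_contra h
      apply hns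
      have hc2 : c * c = -1 := by
        rcases not_and_or.mp h with h' | h'
        · have hz : (1 + c * c) * w 0 = 0 := by linear_combination h1' - c * h0
          rcases mul_eq_zero.mp hz with h'' | h''
          · linear_combination h''
          · exact absurd h'' h'
        · have hz : (1 + c * c) * w 1 = 0 := by linear_combination -h0 - c * h1'
          rcases mul_eq_zero.mp hz with h'' | h''
          · linear_combination h''
          · exact absurd h'' h'
      exact ⟨c, by linear_combination -hc2⟩
    have hbad := congrFun hwg 0
    simp [Matrix.vecMul, dotProduct, Fin.sum_univ_two, hw0.1, hw0.2] at hbad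
  · intro hv
    have hb : v 1 ≠ 0 := by
      intro h
      apply hv
      rw [Submodule.mem_span_singleton]
      refine ⟨v 0, ?_⟩
      ext i; fin_cases i <;> simp [h]
    obtain ⟨x, y, hxy⟩ := hsum (v 1)
    set a := v 0 with ha
    set b := v 1 with hbdef
    refine ⟨!![(x - a*y)/b, -y; (y + a*x)/b, x], ?_, ?_⟩
    · simp only [Matrix.det_fin_two_of]
      field_simp
      linear_combination hxy
    · set g : Matrix (Fin 2) (Fin 2) F := !![(x - a*y)/b, -y; (y + a*x)/b, x] with hgdef
      have hdet : g.det = 1 := by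
        simp only [hgdef, Matrix.det_fin_two_of]
        field_simp
        linear_combination hxy
      have hginv : IsUnit g.det := by rw [hdet]; exact isUnit_one
      have hwg : Matrix.vecMul ![x, y] g = ![1, 0] := by
        ext i
        fin_cases i
        · simp [hgdef, Matrix.vecMul, dotProduct, Fin.sum_univ_two]
          field_simp
          linear_combination hxy
        · simp [hgdef, Matrix.vecMul, dotProduct, Fin.sum_univ_two]
          ring
      have h1 : Matrix.vecMul ![1, 0] g⁻¹ = ![x, y] := by
        rw [← hwg, Matrix.vecMul_vecMul, Matrix.mul_nonsing_inv g hginv, Matrix.vecMul_one]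
      rw [← Matrix.vecMul_vecMul, ← Matrix.vecMul_vecMul, h1]
      ext i
      fin_cases i
      · simp [hgdef, Matrix.vecMul, dotProduct, Fin.sum_univ_two, ← ha, ← hbdef]
        field_simp
        linear_combination (a : F) * hxy
      · simp [hgdef, Matrix.vecMul, dotProduct, Fin.sum_univ_two, ← ha, ← hbdef]
        linear_combination hxy
end

section
/- Let m ≥ 3 be odd, q a prime power, and suppose p(x) = x^m - a₁x^{m-1} - ⋯ - a_{m-1}x - 1 is an irreducible polynomial over F_q with constant term -(-1) (i.e., the companion matrix has determinant 1). Let g be the companion matrix of p and, for q odd, let z = diag(-I_{(m-1)/2}, 1, -I_{(m-1)/2}). Then z is an involution in SL_m(F_q) and the commutator [g,z] = g⁻¹zgz is an involution. -/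
open Polynomial

private lemma fin_sum_ite {M : Type*} [AddCommMonoid M] {m : ℕ} (v : ℕ) (hv : v < m)
    (p : Fin m → Prop) [DecidablePred p] (hp : ∀ x : Fin m, p x ↔ (x : ℕ) = v) (f : Fin m → M) :
    (∑ x : Fin m, if p x then f x else 0) = f ⟨v, hv⟩ := by
  have h1 : ∀ x : Fin m, (if p x then f x else 0) = if x = ⟨v, hv⟩ then f x else 0 :=
    fun x => if_congr ((hp x).trans (@Fin.ext_iff _ x ⟨v, hv⟩).symm) rfl rfl
  rw [Finset.sum_congr rfl fun x _ => h1 x,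
    Finset.sum_ite_eq' Finset.univ (⟨v, hv⟩ : Fin m) f]
  exact if_pos (Finset.mem_univ _)

private lemma fin_sum_zero {M : Type*} [AddCommMonoid M] {m : ℕ}
    (p : Fin m → Prop) [DecidablePred p] (hp : ∀ x : Fin m, ¬ p x) (f : Fin m → M) :
    (∑ x : Fin m, if p x then f x else 0) = 0 :=
  Finset.sum_eq_zero fun x _ => if_neg (hp x)

set_option maxHeartbeats 1000000 in
/-- Let `q` be odd, `m ≥ 3` odd, and let `g` be the companion matrix of an
irreducible polynomial `X^m - a_{m-1}X^{m-1} - ⋯ - a₁X - 1` over `F_q`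
(so `g` has `1`'s on the superdiagonal, bottom row `a` with `a 0 = 1`, and
determinant 1). Let `z = diag(-I_{(m-1)/2}, 1, -I_{(m-1)/2})`. Then `z` is an
involution in `SL_m(F_q)` and the commutator `[g,z] = g⁻¹zgz` is an
involution. -/
theorem companion_commutator_involution {F : Type*} [Field F] [Fintype F]
    (hodd : Odd (Fintype.card F))
    (m : ℕ) (hm : 3 ≤ m) (hmodd : Odd m)
    (a : Fin m → F) (ha : a ⟨0, by omega⟩ = 1)
    (hirr : Irreducible ((X : F[X]) ^ m - ∑ j : Fin m, C (a j) * X ^ (j : ℕ)))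
    (g z : Matrix (Fin m) (Fin m) F)
    (hg : ∀ i j : Fin m, g i j =
      if (i : ℕ) + 1 = (j : ℕ) then 1
      else if (i : ℕ) = m - 1 then a j else 0)
    (hz : ∀ i j : Fin m, z i j =
      if i = j then (if (i : ℕ) = (m - 1) / 2 then 1 else -1) else 0) :
    z.det = 1 ∧ z * z = 1 ∧ z ≠ 1 ∧
      (g⁻¹ * z * g * z) * (g⁻¹ * z * g * z) = 1 ∧ g⁻¹ * z * g * z ≠ 1 := by
  clear hirr
  have hm0 : 0 < m := by omega
  have hklt : (m - 1) / 2 < m := by omega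
  have hkm : (m - 1) / 2 + 1 < m := by omega
  have hchar : ringChar F ≠ 2 := fun h => by
    have h2 := FiniteField.even_card_of_char_two h
    rw [Nat.odd_iff] at hodd; omega
  have hne : (-1 : F) ≠ 1 := Ring.neg_one_ne_one_of_char_ne_two hchar
  -- z is the diagonal matrix of ±1's
  have hzd : z = Matrix.diagonal (fun i : Fin m => if (i : ℕ) = (m - 1) / 2 then (1:F) else -1) := by
    ext i j
    rw [hz, Matrix.diagonal_apply]
  have hdet : z.det = 1 := by
    rw [hzd, Matrix.det_diagonal]
    rw [Finset.prod_congr rfl (fun (i : Fin m) _ => show (if (i:ℕ) = (m-1)/2 then (1:F) else -1)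
        = -1 * (if i = (⟨(m-1)/2, hklt⟩ : Fin m) then -1 else 1) by
      by_cases h : (i:ℕ) = (m-1)/2
      · rw [if_pos h, if_pos (Fin.ext h)]; norm_num
      · rw [if_neg h, if_neg (fun hc => h (by rw [hc]))]; norm_num)]
    rw [Finset.prod_mul_distrib, Finset.prod_const, Finset.prod_ite_eq',
      if_pos (Finset.mem_univ _), Finset.card_univ, Fintype.card_fin, Odd.neg_one_pow hmodd]
    norm_num
  have hzz : z * z = 1 := by
    rw [hzd, Matrix.diagonal_mul_diagonal]
    rw [show (fun i : Fin m => (if (i:ℕ) = (m-1)/2 then (1:F) else -1) *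
        if (i:ℕ) = (m-1)/2 then (1:F) else -1) = fun _ => (1:F) from
      funext fun i => by
        by_cases h : (i:ℕ) = (m-1)/2 <;> simp [h]]
    exact Matrix.diagonal_one
  have hz1 : z ≠ 1 := by
    intro h
    have h00 := congrFun (congrFun h ⟨0, hm0⟩) ⟨0, hm0⟩
    rw [hz, if_pos rfl, Matrix.one_apply_eq,
      if_neg (show ¬ ((⟨0, hm0⟩ : Fin m) : ℕ) = (m-1)/2 by simp only [Fin.val_mk]; omega)] at h00
    exact hne h00
  -- auxiliary matrices
  set dd : Fin m → F := fun x => if (x:ℕ) = (m-1)/2 ∨ (x:ℕ) = (m-1)/2 + 1 then -1 else 1 with hdd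
  set E : Matrix (Fin m) (Fin m) F :=
    Matrix.single ⟨0, hm0⟩ ⟨(m-1)/2+1, hkm⟩ (2 * a ⟨(m-1)/2+1, hkm⟩) with hE
  set cm : Matrix (Fin m) (Fin m) F := Matrix.diagonal dd + E with hcm
  set g' : Matrix (Fin m) (Fin m) F := Matrix.of (fun i j : Fin m =>
    (if (j:ℕ) + 1 = (i:ℕ) then (1:F) else 0) +
    (if (i:ℕ) = 0 then (if (j:ℕ) = m - 1 then 1
      else -(a ⟨((j:ℕ)+1) % m, Nat.mod_lt _ hm0⟩)) else 0)) with hg'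
  have grow_bot : ∀ (i : Fin m), (i:ℕ) = m - 1 → ∀ x, g i x = a x := fun i hi x => by
    rw [hg, if_neg (by have := x.isLt; omega), if_pos hi]
  have mulg : ∀ (M : Matrix (Fin m) (Fin m) F) (i j : Fin m) (h : (i:ℕ) + 1 < m),
      (g * M) i j = M ⟨(i:ℕ)+1, h⟩ j := by
    intro M i j h
    rw [Matrix.mul_apply]
    have h1 : ∀ x : Fin m, g i x * M x j = if x = (⟨(i:ℕ)+1, h⟩ : Fin m) then M x j else 0 := by
      intro x
      by_cases hx : (i:ℕ) + 1 = (x:ℕ)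
      · rw [hg, if_pos hx, one_mul, if_pos (Fin.ext hx.symm)]
      · rw [hg, if_neg hx, if_neg (by omega), zero_mul, if_neg (fun hc => hx (by rw [hc]))]
    rw [Finset.sum_congr rfl fun x _ => h1 x, Finset.sum_ite_eq' Finset.univ _ fun x => M x j]
    exact if_pos (Finset.mem_univ _)
  have hgg' : g * g' = 1 := by
    ext i j
    have hjlt := j.isLt
    rw [Matrix.one_apply]
    by_cases hi : (i:ℕ) + 1 < m
    · rw [mulg g' i j hi, hg', Matrix.of_apply]
      simp only [Fin.ext_iff, Fin.val_mk]
      split_ifs <;> first | omega | (exfalso; assumption) | (exfalso; exact ‹False ∧ _›.1) | (norm_num; done) | ring1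
    · have hi' : (i:ℕ) = m - 1 := by have := i.isLt; omega
      rw [Matrix.mul_apply]
      rw [Finset.sum_congr rfl fun x _ => by rw [grow_bot i hi' x]]
      have hsplit : ∀ x : Fin m, a x * g' x j =
          (if (j:ℕ)+1 = (x:ℕ) then a x else 0) +
          (if (x:ℕ) = 0 then a x * (if (j:ℕ) = m - 1 then 1
            else -(a ⟨((j:ℕ)+1) % m, Nat.mod_lt _ hm0⟩)) else 0) := by
        intro x
        rw [hg', Matrix.of_apply, mul_add]
        congr 1
        · by_cases h : (j:ℕ)+1 = (x:ℕ) <;> simp [h]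
        · by_cases h : (x:ℕ) = 0 <;> simp [h]
      rw [Finset.sum_congr rfl fun x _ => hsplit x, Finset.sum_add_distrib]
      have ha0 : a ⟨0, hm0⟩ = 1 := ha
      by_cases hj : (j:ℕ) = m - 1
      · rw [fin_sum_zero (fun x : Fin m => (j:ℕ)+1 = (x:ℕ))
            (fun x => by have := x.isLt; omega) (fun x => a x),
          fin_sum_ite 0 hm0 (fun x : Fin m => (x:ℕ) = 0) (fun x => Iff.rfl)
            (fun x => a x * (if (j:ℕ) = m - 1 then 1
              else -(a ⟨((j:ℕ)+1) % m, Nat.mod_lt _ hm0⟩)))]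
        rw [if_pos hj, if_pos (show i = j from Fin.ext (by omega)), ha0]
        norm_num
      · have hjm : (j:ℕ) + 1 < m := by omega
        rw [fin_sum_ite ((j:ℕ)+1) hjm (fun x : Fin m => (j:ℕ)+1 = (x:ℕ))
            (fun x => by omega) (fun x => a x),
          fin_sum_ite 0 hm0 (fun x : Fin m => (x:ℕ) = 0) (fun x => Iff.rfl)
            (fun x => a x * (if (j:ℕ) = m - 1 then 1
              else -(a ⟨((j:ℕ)+1) % m, Nat.mod_lt _ hm0⟩)))]
        have hmod : a ⟨((j:ℕ)+1) % m, Nat.mod_lt _ hm0⟩ = a ⟨(j:ℕ)+1, hjm⟩ :=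
          congrArg a (Fin.ext (Nat.mod_eq_of_lt hjm))
        rw [if_neg hj, if_neg (show ¬ i = j from fun hc => hj (by rw [← hc]; exact hi')),
          ha0, hmod]
        ring
  have hinv : g⁻¹ = g' := Matrix.inv_eq_right_inv hgg'
  have hg'g : g' * g = 1 := mul_eq_one_comm.mp hgg'
  -- the commutator equals cm : g * cm = z * g * z
  have hA : g * cm = z * g * z := by
    ext i j
    have hjlt := j.isLt
    rw [hzd, Matrix.mul_diagonal, Matrix.diagonal_mul, hg i j]
    by_cases hi : (i:ℕ) + 1 < m
    · rw [mulg cm i j hi, hcm, Matrix.add_apply, Matrix.diagonal_apply, hE, hdd]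
      simp only [Matrix.single, Matrix.of_apply, Fin.ext_iff, Fin.val_mk, false_and, if_false]
      split_ifs <;> first | omega | (exfalso; assumption) | (exfalso; exact ‹False ∧ _›.1) | (norm_num; done) | ring1
    · have hi' : (i:ℕ) = m - 1 := by have := i.isLt; omega
      have hik : ¬ (i:ℕ) = (m-1)/2 := by omega
      rw [Matrix.mul_apply, Finset.sum_congr rfl fun x _ => by rw [grow_bot i hi' x]]
      rw [if_neg (show ¬ (i:ℕ)+1 = (j:ℕ) by omega), if_pos hi']
      have hsplit : ∀ x : Fin m, a x * cm x j =
          (if x = j then a x * dd x else 0) +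
          (if (⟨0, hm0⟩ : Fin m) = x ∧ (⟨(m-1)/2+1, hkm⟩ : Fin m) = j
            then a x * (2 * a ⟨(m-1)/2+1, hkm⟩) else 0) := by
        intro x
        rw [hcm, Matrix.add_apply, Matrix.diagonal_apply, hE]
        simp only [Matrix.single, Matrix.of_apply]
        rw [mul_add]
        congr 1
        · split_ifs <;> ring
        · split_ifs <;> ring
      rw [Finset.sum_congr rfl fun x _ => hsplit x, Finset.sum_add_distrib,
        show (∑ x : Fin m, if x = j then a x * dd x else 0) = a j * dd j from
          (Finset.sum_ite_eq' _ _ _).trans (if_pos (Finset.mem_univ _))]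
      have ha0 : a ⟨0, hm0⟩ = 1 := ha
      by_cases hj : (⟨(m-1)/2+1, hkm⟩ : Fin m) = j
      · rw [Finset.sum_congr rfl fun x _ => if_congr ((and_iff_left hj).trans eq_comm) rfl rfl,
          Finset.sum_ite_eq' Finset.univ (⟨0, hm0⟩ : Fin m) _, if_pos (Finset.mem_univ _)]
        have haj : a ⟨(m-1)/2+1, hkm⟩ = a j := congrArg a hj
        have hjv : (j:ℕ) = (m-1)/2 + 1 := by rw [← hj]
        rw [ha0, haj, hdd]
        simp only []
        rw [if_pos (Or.inr hjv), if_neg hik, if_neg (by omega)]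
        ring
      · rw [Finset.sum_eq_zero fun x _ => if_neg (fun hc => hj hc.2), add_zero, hdd]
        have hjv : ¬ (j:ℕ) = (m-1)/2 + 1 := fun hc => hj (Fin.ext hc.symm)
        simp only []
        rw [if_neg hik]
        by_cases hjk : (j:ℕ) = (m-1)/2
        · rw [if_pos (Or.inl hjk), if_pos hjk]; ring
        · rw [if_neg (by omega), if_neg hjk]; ring
  have hcomm : g⁻¹ * z * g * z = cm := by
    rw [hinv, mul_assoc, mul_assoc, ← mul_assoc z g z, ← hA, ← mul_assoc, hg'g, one_mul]
  -- cm is an involution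
  have hdd2 : ∀ x : Fin m, dd x * dd x = 1 := fun x => by
    rw [hdd]; simp only []
    by_cases h : (x:ℕ) = (m-1)/2 ∨ (x:ℕ) = (m-1)/2 + 1 <;> simp [h]
  have hDD : Matrix.diagonal dd * Matrix.diagonal dd = 1 := by
    rw [Matrix.diagonal_mul_diagonal,
      show (fun i : Fin m => dd i * dd i) = fun _ => (1:F) from funext fun x => hdd2 x]
    exact Matrix.diagonal_one
  have hDE : Matrix.diagonal dd * E = E := by
    ext i j
    rw [Matrix.diagonal_mul, hE, hdd]
    simp only [Matrix.single, Matrix.of_apply, Fin.ext_iff, Fin.val_mk, false_and, if_false]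
    split_ifs <;> first | omega | (exfalso; assumption) | (exfalso; exact ‹False ∧ _›.1) | (norm_num; done) | ring1
  have hED : E * Matrix.diagonal dd = -E := by
    ext i j
    rw [Matrix.mul_diagonal, Matrix.neg_apply, hE, hdd]
    simp only [Matrix.single, Matrix.of_apply, Fin.ext_iff, Fin.val_mk, false_and, if_false]
    split_ifs <;> first | omega | (exfalso; assumption) | (exfalso; exact ‹False ∧ _›.1) | (norm_num; done) | ring1
  have hEE : E * E = 0 := by
    rw [hE]
    exact Matrix.single_mul_single_of_ne (h :=
      (fun hc => by simp only [Fin.mk.injEq] at hc; omega)) ..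
  have hcc : cm * cm = 1 := by
    rw [hcm, add_mul, mul_add, mul_add, hDD, hDE, hED, hEE]
    abel
  have hcne : cm ≠ 1 := by
    intro h
    have h00 := congrFun (congrFun h ⟨(m-1)/2, hklt⟩) ⟨(m-1)/2, hklt⟩
    rw [hcm, Matrix.add_apply, Matrix.diagonal_apply_eq, Matrix.one_apply_eq, hE,
      Matrix.single_apply_of_ne _ _ _ _ _
        (fun hc => by simp only [Fin.mk.injEq] at hc; omega),
      show dd ⟨(m-1)/2, hklt⟩ = -1 from if_pos (Or.inl rfl), add_zero] at h00
    exact hne h00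
  refine ⟨hdet, hzz, hz1, ?_, ?_⟩
  · rw [hcomm]; exact hcc
  · rw [hcomm]; exact hcne
end

section
/- Let m ≥ 3 be odd and q a power of 2. With g the companion matrix of an irreducible polynomial x^m - a₁x^{m-1} - ⋯ - a_{m-1}x - 1 over F_q with determinant 1, and z the transvection which is the identity except for a 1 in position (1,2), the commutator [g,z] has order 4 in SL_m(F_q). -/
set_option maxHeartbeats 1000000


open Polynomial

/-- Let `q` be a power of `2`, `m ≥ 3` odd, `g` the companion matrix of an
irreducible polynomial `X^m - a_{m-1}X^{m-1} - ⋯ - a₁X - 1` over `F_q`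
(bottom row `a` with `a 0 = 1`, determinant 1), and `z = I + E₁₂` the
transvection. Then the commutator `[g,z] = g⁻¹zgz` has order `4`. -/
theorem companion_commutator_order_four {F : Type*} [Field F] [Fintype F]
    (hchar : ringChar F = 2)
    (m : ℕ) (hm : 3 ≤ m) (hmodd : Odd m)
    (a : Fin m → F) (ha : a ⟨0, by omega⟩ = 1)
    (hirr : Irreducible ((X : F[X]) ^ m - ∑ j : Fin m, C (a j) * X ^ (j : ℕ)))
    (g z : Matrix (Fin m) (Fin m) F)
    (hg : ∀ i j : Fin m, g i j =
      if (i : ℕ) + 1 = (j : ℕ) then 1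
      else if (i : ℕ) = m - 1 then a j else 0)
    (hz : ∀ i j : Fin m, z i j =
      if i = j then 1 else if (i : ℕ) = 0 ∧ (j : ℕ) = 1 then 1 else 0) :
    orderOf (g⁻¹ * z * g * z) = 4 := by
  classical
  haveI : CharP F 2 := hchar ▸ ringChar.charP F
  have hF2 : (2 : F) = 0 := by exact_mod_cast CharP.cast_eq_zero F 2
  have hadd : ∀ x : F, x + x = 0 := fun x => by rw [← two_mul, hF2, zero_mul]
  -- indices
  set i0 : Fin m := ⟨0, by omega⟩ with hi0
  set i1 : Fin m := ⟨1, by omega⟩ with hi1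
  set i2 : Fin m := ⟨2, by omega⟩ with hi2
  set iL : Fin m := ⟨m - 1, by omega⟩ with hiL
  have h01 : i0 ≠ i1 := by simp [hi0, hi1, Fin.ext_iff]
  have h12 : i1 ≠ i2 := by simp [hi1, hi2, Fin.ext_iff]
  have h02 : i0 ≠ i2 := by simp [hi0, hi2, Fin.ext_iff]
  have h10 : i1 ≠ i0 := h01.symm
  have h21 : i2 ≠ i1 := h12.symm
  have h20 : i2 ≠ i0 := h02.symm
  -- z = 1 + E₀₁
  have hzE : z = 1 + Matrix.single i0 i1 (1 : F) := by
    ext i j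
    rw [hz, Matrix.add_apply]
    rcases eq_or_ne i j with rfl | hij
    · have hne : ¬(i0 = i ∧ i1 = i) := by rintro ⟨rfl, h⟩; exact h01 h.symm
      simp [Matrix.one_apply, Matrix.single_apply_of_ne (h := hne)]
    · rw [if_neg hij, Matrix.one_apply_ne hij]
      by_cases hcond : (i : ℕ) = 0 ∧ (j : ℕ) = 1
      · have hii : i0 = i := by apply Fin.ext; simp [hi0, hcond.1]
        have hjj : i1 = j := by apply Fin.ext; simp [hi1, hcond.2]
        rw [if_pos hcond,
          show (Matrix.single i0 i1 (1 : F)) i j = 1 by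
            rw [← hii, ← hjj]; exact Matrix.single_apply_same _ _ _,
          zero_add]
      · have hne : ¬(i0 = i ∧ i1 = j) := by
          rintro ⟨rfl, rfl⟩; exact hcond ⟨rfl, rfl⟩
        rw [if_neg hcond, Matrix.single_apply_of_ne (h := hne), add_zero]
  -- row 1 of g is e₂ : E₀₁ * g = E₀₂
  have hrow : Matrix.single i0 i1 (1 : F) * g = Matrix.single i0 i2 (1 : F) := by
    ext i k
    rcases eq_or_ne i i0 with rfl | hii
    · rw [Matrix.single_mul_apply_same, one_mul, hg]
      rcases eq_or_ne k i2 with rfl | hkk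
      · simp [hi1, hi2]
      · have h1 : ¬((i1 : ℕ) + 1 = (k : ℕ)) := by
          simp [hi1]; intro h; exact hkk (by simp [hi2, Fin.ext_iff]; omega)
        have h2 : ¬((i1 : ℕ) = m - 1) := by simp [hi1]; omega
        simp [h1, h2, Matrix.single_apply_of_col_ne (hj := hkk.symm)]
    · rw [Matrix.single_mul_apply_of_ne (h := hii),
        Matrix.single_apply_of_row_ne (Ne.symm hii)]
  -- column 1 of g : g * E₁₂ = E₀₂ + a₁ • E_{m-1,2}
  have hcol1 : g * Matrix.single i1 i2 (1 : F) = Matrix.single i0 i2 (1 : F) + a i1 • Matrix.single iL i2 (1 : F) := by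
    ext i k
    rcases eq_or_ne k i2 with rfl | hkk
    · rw [Matrix.mul_single_apply_same, mul_one, hg]
      rcases eq_or_ne i i0 with rfl | hii
      · have hL : iL ≠ i0 := by simp [hi0, hiL, Fin.ext_iff]; omega
        have hcond : (i0 : ℕ) + 1 = (i1 : ℕ) := by simp [hi0, hi1]
        rw [if_pos hcond, Matrix.add_apply, Matrix.smul_apply,
          Matrix.single_apply_same,
          Matrix.single_apply_of_row_ne hL, smul_zero, add_zero]
      · have h1 : ¬((i : ℕ) + 1 = (i1 : ℕ)) := by
          simp [hi1]; intro h; exact hii (by simp [hi0, Fin.ext_iff]; omega)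
        rcases eq_or_ne i iL with rfl | hiLne
        · simp [h1, hiL, Matrix.single_apply_of_row_ne (Ne.symm hii)]
          rw [if_neg (by simp [hi1]; omega), Matrix.single_apply_of_row_ne (i := i0) (i' := ⟨m - 1, by omega⟩) (by intro h; have := congrArg Fin.val h; simp [hi0] at this; omega), zero_add]
        · have h2 : ¬((i : ℕ) = m - 1) := by
            intro h; exact hiLne (by simp [hiL, Fin.ext_iff, h])
          simp [h1, h2, Matrix.single_apply_of_row_ne (Ne.symm hii),
            Matrix.single_apply_of_row_ne (Ne.symm hiLne)]
    · simp [Matrix.mul_single_apply_of_ne (hbj := hkk),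
        Matrix.single_apply_of_col_ne _ _ (Ne.symm hkk)]
  -- column 0 of g : g * E₀₂ = E_{m-1,2}
  have hcol0 : g * Matrix.single i0 i2 (1 : F) = Matrix.single iL i2 (1 : F) := by
    ext i k
    rcases eq_or_ne k i2 with rfl | hkk
    · rw [Matrix.mul_single_apply_same, mul_one, hg]
      have h1 : ¬((i : ℕ) + 1 = (i0 : ℕ)) := by simp [hi0]
      rcases eq_or_ne i iL with rfl | hiLne
      · simp [h1, hiL, ha, hi0]
        exact ha
      · have h2 : ¬((i : ℕ) = m - 1) := by
          intro h; exact hiLne (by simp [hiL, Fin.ext_iff, h])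
        simp [h1, h2, Matrix.single_apply_of_row_ne (Ne.symm hiLne)]
    · simp [Matrix.mul_single_apply_of_ne (hbj := hkk),
        Matrix.single_apply_of_col_ne _ _ (Ne.symm hkk)]
  -- the commutator matrix
  obtain ⟨c, hc⟩ : ∃ c' : Matrix (Fin m) (Fin m) F,
      c' = 1 + (Matrix.single i0 i1 (1 : F) + Matrix.single i1 i2 (1 : F) + a i1 • Matrix.single i0 i2 (1 : F)) := ⟨_, rfl⟩
  -- key identity : g * c = z * g * z
  have hgc : g * c = z * g * z := by
    rw [hc, hzE]
    simp only [mul_add, add_mul, mul_one, one_mul, Matrix.mul_smul]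
    rw [hcol1, hcol0, hrow, Matrix.single_mul_single_of_ne _ _ _ _ h20]
    have hz2 : a i1 • Matrix.single iL i2 (1 : F) + a i1 • Matrix.single iL i2 (1 : F) = 0 := by
      rw [← add_smul, hadd, zero_smul]
    abel_nf
    rw [show (2 : ℤ) • (a i1 • Matrix.single iL i2 (1 : F)) = a i1 • Matrix.single iL i2 (1 : F) + a i1 • Matrix.single iL i2 (1 : F) from two_smul ℤ _,
      hz2]
    abel
  -- invertibility of g via an explicit right inverse
  obtain ⟨w, hw⟩ : ∃ w' : Matrix (Fin m) (Fin m) F,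
      w' = Matrix.of fun (i k : Fin m) =>
        if i = i0 then (if h : (k : ℕ) + 1 = m then 1 else a ⟨(k : ℕ) + 1, by omega⟩)
        else if (k : ℕ) + 1 = (i : ℕ) then 1 else 0 := ⟨_, rfl⟩
  have hgw : g * w = 1 := by
    ext i k
    rw [Matrix.mul_apply]
    by_cases hi : (i : ℕ) = m - 1
    · have hgrow : ∀ j : Fin m, g i j = a j := by
        intro j
        rw [hg, if_neg (by omega : ¬((i : ℕ) + 1 = (j : ℕ))), if_pos hi]
      simp_rw [hgrow]
      rw [← Finset.add_sum_erase _ _ (Finset.mem_univ i0)]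
      by_cases hk : (k : ℕ) = m - 1
      · have hwk : w i0 k = 1 := by
          have hkm : (k : ℕ) + 1 = m := by omega
          rw [hw]
          simp [hkm]
        have hrest : ∀ j ∈ Finset.univ.erase i0, a j * w j k = 0 := by
          intro j hj
          have hj0 : j ≠ i0 := Finset.ne_of_mem_erase hj
          have hne : ¬((k : ℕ) + 1 = (j : ℕ)) := by omega
          rw [hw]
          simp only [Matrix.of_apply, if_neg hj0, if_neg hne, mul_zero]
        rw [Finset.sum_eq_zero hrest, add_zero, hwk, mul_one, ha]
        have hik : i = k := by apply Fin.ext; omega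
        rw [hik, Matrix.one_apply_eq]
      · have hkm : (k : ℕ) + 1 < m := by omega
        have hwk : w i0 k = a ⟨(k : ℕ) + 1, hkm⟩ := by
          rw [hw]
          simp only [Matrix.of_apply, if_pos rfl]
          rw [dif_neg (by omega : ¬((k : ℕ) + 1 = m))]
          simp
        have hk'mem : (⟨(k : ℕ) + 1, hkm⟩ : Fin m) ∈ Finset.univ.erase i0 := by
          refine Finset.mem_erase_of_ne_of_mem ?_ (Finset.mem_univ _)
          simp [hi0, Fin.ext_iff]
        have hsum : ∑ j ∈ Finset.univ.erase i0, a j * w j k = a ⟨(k : ℕ) + 1, hkm⟩ := by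
          rw [Finset.sum_eq_single_of_mem _ hk'mem]
          · have hne : (⟨(k : ℕ) + 1, hkm⟩ : Fin m) ≠ i0 := by simp [hi0, Fin.ext_iff]
            rw [hw]
            simp only [Matrix.of_apply, if_neg hne]
            simp
          · intro j hj hjne
            have hj0 : j ≠ i0 := Finset.ne_of_mem_erase hj
            have hne : ¬((k : ℕ) + 1 = (j : ℕ)) := by
              intro h
              exact hjne (by apply Fin.ext; simp [← h])
            rw [hw]
            simp only [Matrix.of_apply, if_neg hj0, if_neg hne, mul_zero]
        rw [hsum, hwk, ha, one_mul, hadd]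
        have hik : i ≠ k := by intro h; rw [h] at hi; exact hk hi
        rw [Matrix.one_apply_ne hik]
    · have him : (i : ℕ) + 1 < m := by omega
      have hsum : ∑ j, g i j * w j k = w ⟨(i : ℕ) + 1, him⟩ k := by
        rw [Finset.sum_eq_single_of_mem _ (Finset.mem_univ (⟨(i : ℕ) + 1, him⟩ : Fin m))]
        · rw [hg]
          simp
        · intro j _ hjne
          rw [hg]
          have h1 : ¬((i : ℕ) + 1 = (j : ℕ)) := by
            intro h; exact hjne (by apply Fin.ext; simp [← h])
          simp [h1, hi]
      rw [hsum, hw]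
      have hne : (⟨(i : ℕ) + 1, him⟩ : Fin m) ≠ i0 := by simp [hi0, Fin.ext_iff]
      simp only [Matrix.of_apply, if_neg hne]
      rcases eq_or_ne i k with rfl | hik
      · simp [Matrix.one_apply]
      · have hne2 : ¬((k : ℕ) + 1 = (i : ℕ) + 1) := by
          intro h; exact hik (by apply Fin.ext; omega)
        simp [hne2, Matrix.one_apply, hik]
        exact fun h => hik (Fin.ext h.symm)
  haveI : Invertible g := invertibleOfRightInverse _ _ hgw
  have hcomm : g⁻¹ * z * g * z = c := by
    rw [mul_assoc, mul_assoc, ← mul_assoc z g z, ← hgc, Matrix.inv_mul_cancel_left_of_invertible]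
  rw [hcomm]
  -- now compute the order of c
  have key : ∀ n : Matrix (Fin m) (Fin m) F, (1 + n) * (1 + n) = 1 + (n + n) + n * n := by
    intro n; noncomm_ring
  have hdouble : ∀ n : Matrix (Fin m) (Fin m) F, n + n = 0 := by
    intro n
    rw [← two_smul F, show ((2 : F) = 0) from hF2, zero_smul]
  have hn2 : (Matrix.single i0 i1 (1 : F) + Matrix.single i1 i2 (1 : F)
        + a i1 • Matrix.single i0 i2 (1 : F)) *
      (Matrix.single i0 i1 (1 : F) + Matrix.single i1 i2 (1 : F)
        + a i1 • Matrix.single i0 i2 (1 : F))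
      = Matrix.single i0 i2 (1 : F) := by
    simp only [add_mul, mul_add, smul_mul_assoc, mul_smul_comm,
      Matrix.single_mul_single_same,
      Matrix.single_mul_single_of_ne _ _ _ _ h10,
      Matrix.single_mul_single_of_ne _ _ _ _ h20,
      Matrix.single_mul_single_of_ne _ _ _ _ h21,
      one_mul, smul_zero, add_zero, zero_add]
  have hc2 : c * c = 1 + Matrix.single i0 i2 (1 : F) := by
    rw [hc, key, hdouble, add_zero, hn2]
  have hc4 : c ^ 4 = 1 := by
    have h4 : c ^ 4 = (c * c) * (c * c) := by
      rw [show (4 : ℕ) = 2 * 2 from rfl, pow_mul, pow_two, pow_two]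
    rw [h4, hc2, key, hdouble, add_zero,
      Matrix.single_mul_single_of_ne _ _ _ _ h20, add_zero]
  have hc2ne : c ^ 2 ≠ 1 := by
    rw [pow_two, hc2]
    intro h
    have h' := congrFun (congrFun h i0) i2
    simp [Matrix.add_apply, Matrix.one_apply, h02] at h'
  haveI : Fact (Nat.Prime 2) := ⟨Nat.prime_two⟩
  have hfin := orderOf_eq_prime_pow (x := c) (p := 2) (n := 1)
    (by rw [pow_one]; exact hc2ne) (by norm_num; exact hc4)
  simpa using hfin
end
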